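/- (Marsden identity for the alternative cubic S-basis.) Let T3 ∈ ℝ^{16×16} be the identity matrix except that its principal submatrix on rows and columns (13, 14, 15, 16) equals [[3/4, 0, 0, 1/4], [0, 3/4, 0, 1/4], [0, 0, 3/4, 1/4], [0, 0, 0, 1]]. Then for all y ∈ ℝ², T3·ψ̃3(y) = ψ3(y). -/
import Mathlib


/-- Euclidean inner product on `ℝ²`. -/
def dotR2 (x y : ℝ × ℝ) : ℝ := x.1 * y.1 + x.2 * y.2

/-- The linear polynomial `c_p(y) = 1 − p·y` attached to a point `p`. -/
noncomputable def cpl (p y : ℝ × ℝ) : ℝ := 1 - dotR2 p y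

/-- The 16×16 matrix `T3`: the identity except that its principal submatrix on
rows/columns (13,14,15,16) (1-based; here 0-based indices 12,13,14,15) is
`[[3/4,0,0,1/4],[0,3/4,0,1/4],[0,0,3/4,1/4],[0,0,0,1]]`. -/
noncomputable def T3 : Matrix (Fin 16) (Fin 16) ℝ :=
  Matrix.of fun i j =>
    if i = 12 then (if j = 12 then 3/4 else if j = 15 then 1/4 else 0)
    else if i = 13 then (if j = 13 then 3/4 else if j = 15 then 1/4 else 0)
    else if i = 14 then (if j = 14 then 3/4 else if j = 15 then 1/4 else 0)
    else if i = j then 1 else 0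


set_option maxHeartbeats 1000000

lemma T3_mulVec (v : Fin 16 → ℝ) :
    T3.mulVec v =
      ![v 0, v 1, v 2, v 3, v 4, v 5, v 6, v 7, v 8, v 9, v 10, v 11,
        3/4 * v 12 + 1/4 * v 15, 3/4 * v 13 + 1/4 * v 15,
        3/4 * v 14 + 1/4 * v 15, v 15] := by
  funext i
  fin_cases i <;>
    · simp (config := { decide := true }) only [Matrix.mulVec, dotProduct, T3,
        Matrix.of_apply, Fin.sum_univ_succ, Fin.sum_univ_zero, if_true, if_false]
      norm_num
      all_goals (congr <;> decide)


lemma T3_mulVec' (a0 a1 a2 a3 a4 a5 a6 a7 a8 a9 a10 a11 a12 a13 a14 a15 : ℝ) :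
    T3.mulVec ![a0,a1,a2,a3,a4,a5,a6,a7,a8,a9,a10,a11,a12,a13,a14,a15] =
      ![a0,a1,a2,a3,a4,a5,a6,a7,a8,a9,a10,a11,
        3/4 * a12 + 1/4 * a15, 3/4 * a13 + 1/4 * a15, 3/4 * a14 + 1/4 * a15, a15] := by
  rw [T3_mulVec]; rfl

/-- Marsden identity for the alternative cubic S-basis:
`T3 ψ̃3(y) = ψ3(y)` for all `y`. -/
theorem marsden_alternative_cubic
    (p1 p2 p3 : ℝ × ℝ)
    (hind : AffineIndependent ℝ ![p1, p2, p3])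
    (p4 p5 p6 p10 : ℝ × ℝ)
    (h4 : p4 = (2⁻¹ : ℝ) • (p1 + p2))
    (h5 : p5 = (2⁻¹ : ℝ) • (p2 + p3))
    (h6 : p6 = (2⁻¹ : ℝ) • (p3 + p1))
    (h10 : p10 = (3⁻¹ : ℝ) • (p1 + p2 + p3)) :
    ∀ y : ℝ × ℝ,
      T3.mulVec
        ![cpl p1 y ^ 3, cpl p1 y ^ 2 * cpl p4 y, cpl p1 y * cpl p2 y * cpl p4 y,
          cpl p2 y ^ 2 * cpl p4 y, cpl p2 y ^ 3, cpl p2 y ^ 2 * cpl p5 y,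
          cpl p2 y * cpl p3 y * cpl p5 y, cpl p3 y ^ 2 * cpl p5 y, cpl p3 y ^ 3,
          cpl p3 y ^ 2 * cpl p6 y, cpl p1 y * cpl p3 y * cpl p6 y, cpl p1 y ^ 2 * cpl p6 y,
          cpl p1 y ^ 2 * cpl p10 y, cpl p2 y ^ 2 * cpl p10 y, cpl p3 y ^ 2 * cpl p10 y,
          cpl p1 y * cpl p2 y * cpl p3 y] =
        ![cpl p1 y ^ 3, cpl p1 y ^ 2 * cpl p4 y, cpl p1 y * cpl p2 y * cpl p4 y,
          cpl p2 y ^ 2 * cpl p4 y, cpl p2 y ^ 3, cpl p2 y ^ 2 * cpl p5 y,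
          cpl p2 y * cpl p3 y * cpl p5 y, cpl p3 y ^ 2 * cpl p5 y, cpl p3 y ^ 3,
          cpl p3 y ^ 2 * cpl p6 y, cpl p1 y * cpl p3 y * cpl p6 y, cpl p1 y ^ 2 * cpl p6 y,
          cpl p1 y * cpl p4 y * cpl p6 y, cpl p2 y * cpl p4 y * cpl p5 y,
          cpl p3 y * cpl p5 y * cpl p6 y, cpl p1 y * cpl p2 y * cpl p3 y] := by
  intro y
  have e12 : (3/4 : ℝ) * (cpl p1 y ^ 2 * cpl p10 y) + 1/4 * (cpl p1 y * cpl p2 y * cpl p3 y) =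
      cpl p1 y * cpl p4 y * cpl p6 y := by
    subst h4 h6 h10
    simp only [cpl, dotR2, Prod.fst_add, Prod.snd_add, Prod.smul_fst, Prod.smul_snd,
      smul_eq_mul]
    ring
  have e13 : (3/4 : ℝ) * (cpl p2 y ^ 2 * cpl p10 y) + 1/4 * (cpl p1 y * cpl p2 y * cpl p3 y) =
      cpl p2 y * cpl p4 y * cpl p5 y := by
    subst h4 h5 h10
    simp only [cpl, dotR2, Prod.fst_add, Prod.snd_add, Prod.smul_fst, Prod.smul_snd,
      smul_eq_mul]
    ring
  have e14 : (3/4 : ℝ) * (cpl p3 y ^ 2 * cpl p10 y) + 1/4 * (cpl p1 y * cpl p2 y * cpl p3 y) =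
      cpl p3 y * cpl p5 y * cpl p6 y := by
    subst h5 h6 h10
    simp only [cpl, dotR2, Prod.fst_add, Prod.snd_add, Prod.smul_fst, Prod.smul_snd,
      smul_eq_mul]
    ring
  rw [T3_mulVec', e12, e13, e14]
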